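/- arXiv:1904.11802 — 8 statements merged into one kernel-verified Lean document; each statement's English description precedes it below -/
import Mathlib

section
/- For every element α of the monoid I∞⇗(ℕ) of almost monotone cofinite partial bijections of ℕ and every γ ∈ I∞⇗(ℕ), the sets {χ ∈ I∞⇗(ℕ) : α ∘ χ = γ} and {χ ∈ I∞⇗(ℕ) : χ ∘ α = γ} are finite. -/
/-- Composition of partial selfmaps of ℕ: apply `f` first, then `g`. -/
def PComp (f g : ℕ → Option ℕ) : ℕ → Option ℕ := fun n => (f n).bind g

/-- The identity partial map on ℕ. -/
def pid : ℕ → Option ℕ := fun n => some n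

/-- `f` is injective where defined (a partial bijection). -/
def PInj (f : ℕ → Option ℕ) : Prop := ∀ a b c, f a = some c → f b = some c → a = b

/-- Domain of a partial map. -/
def pdom (f : ℕ → Option ℕ) : Set ℕ := {n | f n ≠ none}

/-- Range of a partial map. -/
def pran (f : ℕ → Option ℕ) : Set ℕ := {m | ∃ n, f n = some m}

/-- `g` is the inverse partial map of `f`. -/
def PInv (f g : ℕ → Option ℕ) : Prop := ∀ a b, f a = some b ↔ g b = some a

/-- Domain and range are cofinite. -/
def PCofinite (f : ℕ → Option ℕ) : Prop := (pdom f)ᶜ.Finite ∧ (pran f)ᶜ.Finite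

/-- `f` is strictly increasing on its domain. -/
def PMono (f : ℕ → Option ℕ) : Prop :=
  ∀ a b c d, f a = some c → f b = some d → a < b → c < d

/-- The monoid `I∞↗(ℕ)`: cofinite monotone injective partial selfmaps of ℕ. -/
def InIoo (f : ℕ → Option ℕ) : Prop := PInj f ∧ PCofinite f ∧ PMono f

/-- The monoid `I∞⇗(ℕ)`: cofinite almost monotone injective partial selfmaps of ℕ. -/
def IAlmost (f : ℕ → Option ℕ) : Prop :=
  PInj f ∧ PCofinite f ∧ ∃ A : Set ℕ, A.Finite ∧
    ∀ a b c d, a ∉ A → b ∉ A → f a = some c → f b = some d → a < b → c < d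

/-- The monoid `Iℕ∞`: cofinite partial isometries of ℕ. -/
def Isom (f : ℕ → Option ℕ) : Prop :=
  PInj f ∧ PCofinite f ∧ ∀ a b c d, f a = some c → f b = some d →
    |(c : ℤ) - (d : ℤ)| = |(a : ℤ) - (b : ℤ)|

/-- The shift `n ↦ n + 1`, defined everywhere. -/
def alphaShift : ℕ → Option ℕ := fun n => some (n + 1)

/-- The inverse partial shift `n ↦ n - 1`, undefined at the least element of ℕ. -/
def betaShift : ℕ → Option ℕ := fun n => if n = 0 then none else some (n - 1)

/-- Iterated composition power of a partial map. -/
def PPow (f : ℕ → Option ℕ) : ℕ → ℕ → Option ℕ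
  | 0 => pid
  | n + 1 => PComp (PPow f n) f

lemma key_finite (S : Set (ℕ → Option ℕ)) (F : Set ℕ) (hF : F.Finite)
    (V : Set (Option ℕ)) (hV : V.Finite)
    (h1 : ∀ x ∈ S, ∀ y ∈ S, ∀ m ∉ F, x m = y m)
    (h2 : ∀ x ∈ S, ∀ m ∈ F, x m ∈ V) : S.Finite := by
  rcases S.eq_empty_or_nonempty with rfl | ⟨x0, hx0⟩
  · exact Set.finite_empty
  have : Finite F := hF
  apply Set.Finite.of_finite_image (f := fun x (m : F) => x m)
  · apply Set.Finite.subset (Set.Finite.pi (fun _ : F => hV))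
    rintro h ⟨x, hx, rfl⟩
    exact fun m _ => h2 x hx m m.2
  · intro x hx y hy hxy
    funext m
    by_cases hm : m ∈ F
    · exact congrFun hxy ⟨m, hm⟩
    · rw [h1 x hx x0 hx0 m hm, h1 y hy x0 hx0 m hm]

/-- In `I∞⇗(ℕ)` the translation equations `α ∘ χ = γ` and `χ ∘ α = γ` have only
finitely many solutions. -/
theorem stmt10 (a g : ℕ → Option ℕ) (ha : IAlmost a) (hg : IAlmost g) :
    {x | IAlmost x ∧ PComp a x = g}.Finite ∧
    {x | IAlmost x ∧ PComp x a = g}.Finite := by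
  constructor
  · -- solutions of a ∘ x = g
    set R : Set ℕ := {k | ∃ n m', a n = some m' ∧ g n = some k} with hR
    have hRc : Rᶜ.Finite := by
      apply Set.Finite.subset (((hg.2.1.2).union ((ha.2.1.1).image (fun n => (g n).getD 0))))
      intro k hk
      by_cases hkg : k ∈ pran g
      · obtain ⟨n, hn⟩ := hkg
        right
        refine ⟨n, ?_, by show (g n).getD 0 = k; rw [hn]; rfl⟩
        intro hna
        rcases Option.ne_none_iff_exists'.mp hna with ⟨m', hm'⟩
        exact hk ⟨n, m', hm', hn⟩
      · exact Or.inl hkg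
    apply key_finite _ ((pran a)ᶜ) ha.2.1.2 (insert none (some '' Rᶜ))
      ((hRc.image _).insert _)
    · rintro x ⟨hxa, hxc⟩ y ⟨hya, hyc⟩ m hm
      rcases not_not.mp hm with ⟨n, hn⟩
      have h1 := congrFun hxc n
      have h2 := congrFun hyc n
      simp [PComp, hn] at h1 h2
      rw [h1, h2]
    · rintro x ⟨hxa, hxc⟩ m hm
      rcases hxm : x m with _ | k
      · exact Set.mem_insert _ _
      · refine Set.mem_insert_of_mem _ ⟨k, ?_, rfl⟩
        rintro ⟨n, m', han, hgn⟩
        have h1 := congrFun hxc n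
        simp [PComp, han, hgn] at h1
        have hmm := hxa.1 m m' k hxm h1
        exact hm ⟨n, by rw [hmm]; exact han⟩
  · -- solutions of x ∘ a = g
    apply key_finite _ ((pdom g)ᶜ) hg.2.1.1 (insert none (some '' (pdom a)ᶜ))
      (((ha.2.1.1).image _).insert _)
    · rintro x ⟨hxa, hxc⟩ y ⟨hya, hyc⟩ n hn
      have hgn : g n ≠ none := not_not.mp hn
      rcases Option.ne_none_iff_exists'.mp hgn with ⟨c, hc⟩
      have h1 := congrFun hxc n
      have h2 := congrFun hyc n
      simp only [PComp, hc] at h1 h2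
      rcases hxn : x n with _ | m
      · rw [hxn] at h1; simp at h1
      rcases hyn : y n with _ | m'
      · rw [hyn] at h2; simp at h2
      rw [hxn] at h1; rw [hyn] at h2
      simp only [Option.bind_some] at h1 h2
      exact congrArg some (ha.1 m m' c h1 h2)
    · rintro x ⟨hxa, hxc⟩ n hn
      have hgn : g n = none := not_not.mp (fun h => hn h)
      have h1 := congrFun hxc n
      simp only [PComp, hgn] at h1
      rcases hxn : x n with _ | m
      · exact Set.mem_insert _ _
      · rw [hxn] at h1
        simp only [Option.bind_some] at h1
        exact Set.mem_insert_of_mem _ ⟨m, by simp [pdom, h1], rfl⟩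
end

section
/- Let S be an inverse submonoid of I∞⇗(ℕ) containing the bicyclic submonoid C_ℕ generated by the shift n ↦ n+1 and its inverse. Then S is simple: for every β ∈ S there exist γ, δ ∈ S with γ ∘ β ∘ δ equal to the identity of ℕ; hence S has no proper two-sided ideals. -/
lemma ppow_mem {S : Set (ℕ → Option ℕ)} (hid : pid ∈ S)
    (hmul : ∀ f ∈ S, ∀ g ∈ S, PComp f g ∈ S) {f} (hf : f ∈ S) (k : ℕ) :
    PPow f k ∈ S := by
  induction k with
  | zero => exact hid
  | succ n ih => exact hmul _ ih _ hf

lemma alpha_pow (k n : ℕ) : PPow alphaShift k n = some (n + k) := by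
  induction k generalizing n with
  | zero => simp [PPow, pid]
  | succ m ih => simp [PPow, PComp, ih, alphaShift, Nat.add_assoc]

lemma beta_pow (k n : ℕ) : PPow betaShift k n = if k ≤ n then some (n - k) else none := by
  induction k generalizing n with
  | zero => simp [PPow, pid]
  | succ m ih =>
    simp only [PPow, PComp, ih]
    rcases le_or_gt (m+1) n with h | h
    · have h0 : m ≤ n := by omega
      have h1 : ¬ (n - m = 0) := by omega
      simp [h0, h, h1, betaShift]
      omega
    · rcases le_or_gt m n with h2 | h2
      · have h3 : n - m = 0 := by omega
        simp [h2, h3, betaShift, Nat.not_le.mpr h]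
      · simp [Nat.not_le.mpr h2, Nat.not_le.mpr h]

lemma eventually_shift (g : ℕ → ℕ) (hg : StrictMono g)
    (hfin : (Set.range g)ᶜ.Finite) : ∃ M c, ∀ n, M ≤ n → g n = n + c := by
  have hJ : {n | g n + 1 < g (n+1)} ⊆ (fun n => g n + 1) ⁻¹' (Set.range g)ᶜ := by
    intro n hn
    simp only [Set.mem_setOf_eq] at hn
    simp only [Set.mem_preimage, Set.mem_compl_iff, Set.mem_range]
    rintro ⟨m, hm⟩
    have h1 : n < m := hg.lt_iff_lt.mp (by omega)
    have h2 : g (n+1) ≤ g m := hg.monotone (by omega)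
    omega
  have hJfin : {n | g n + 1 < g (n+1)}.Finite := by
    refine Set.Finite.subset (Set.Finite.preimage ?_ hfin) hJ
    exact fun a _ b _ h => hg.injective (by omega)
  obtain ⟨M, hM⟩ := hJfin.bddAbove
  refine ⟨M + 1, g (M+1) - (M+1), ?_⟩
  have key : ∀ k, g (M + 1 + k) = g (M + 1) + k := by
    intro k
    induction k with
    | zero => rfl
    | succ j ih =>
      have hnot : M + 1 + j ∉ {n | g n + 1 < g (n+1)} := by
        intro hmem; exact absurd (hM hmem) (by omega)
      have hlt : g (M + 1 + j) < g (M + 1 + j + 1) := hg (by omega)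
      simp only [Set.mem_setOf_eq, not_lt] at hnot
      have e2 : g (M + 1 + (j + 1)) = g (M + 1 + j + 1) := rfl
      omega
  intro n hn
  have h1 := key (n - (M+1))
  have h2 : (M+1) ≤ g (M+1) := hg.le_apply
  have h3 : M + 1 + (n - (M+1)) = n := by omega
  rw [h3] at h1
  omega

/-- Every element of `I∞⇗(ℕ)` eventually agrees with a shift `n ↦ n - N + c`. -/
lemma ialmost_eventually {b : ℕ → Option ℕ} (hb : IAlmost b) :
    ∃ K c, ∀ n, b (n + K) = some (n + c) := by
  obtain ⟨hinj, ⟨hdom, hran⟩, A, hA, hmono⟩ := hb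
  obtain ⟨N0, hN0⟩ := (hA.union hdom).bddAbove
  set N := N0 + 1 with hN
  have hdef : ∀ n, N ≤ n → ∃ m, b n = some m := by
    intro n hn
    have : n ∉ A ∪ (pdom b)ᶜ := fun hmem => absurd (hN0 hmem) (by omega)
    simp only [Set.mem_union, Set.mem_compl_iff, pdom, Set.mem_setOf_eq, not_not, not_or] at this
    cases h : b n with
    | none => exact absurd h this.2
    | some m => exact ⟨m, rfl⟩
  have hnotA : ∀ n, N ≤ n → n ∉ A := by
    intro n hn hmem
    exact absurd (hN0 (Set.mem_union_left _ hmem)) (by omega)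
  set g : ℕ → ℕ := fun n => (b (N + n)).getD 0 with hg
  have hgb : ∀ n, b (N + n) = some (g n) := by
    intro n
    obtain ⟨m, hm⟩ := hdef (N + n) (by omega)
    simp [hg, hm]
  have hgmono : StrictMono g := by
    intro a c hac
    exact hmono (N + a) (N + c) (g a) (g c) (hnotA _ (by omega)) (hnotA _ (by omega))
      (hgb a) (hgb c) (by omega)
  have hgran : (Set.range g)ᶜ.Finite := by
    have hsub : (Set.range g)ᶜ ⊆ (pran b)ᶜ ∪ (fun n => (b n).getD 0) '' (Set.Iio N) := by
      intro m hm
      simp only [Set.mem_compl_iff, Set.mem_range, not_exists] at hm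
      by_cases hmem : m ∈ pran b
      · obtain ⟨n, hn⟩ := hmem
        rcases le_or_gt N n with h | h
        · exfalso
          apply hm (n - N)
          have e : N + (n - N) = n := by omega
          have hb2 := hgb (n - N)
          rw [e, hn] at hb2
          exact (Option.some.inj hb2).symm
        · exact Set.mem_union_right _ ⟨n, h, by simp [hn]⟩
      · exact Set.mem_union_left _ hmem
    exact (hran.union ((Set.finite_Iio N).image _)).subset hsub
  obtain ⟨M, c, hMc⟩ := eventually_shift g hgmono hgran
  refine ⟨N + M, M + c, fun n => ?_⟩
  have h1 : b (N + (n + M)) = some (g (n + M)) := hgb (n + M)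
  have h2 : g (n + M) = n + M + c := hMc (n + M) (by omega)
  have h3 : n + (N + M) = N + (n + M) := by omega
  rw [h3, h1, h2]
  congr 1
  omega

/-- Simplicity. -/
theorem stmt11 (S : Set (ℕ → Option ℕ))
    (hsub : ∀ f ∈ S, IAlmost f) (hid : pid ∈ S)
    (hmul : ∀ f ∈ S, ∀ g ∈ S, PComp f g ∈ S)
    (hinv : ∀ f ∈ S, ∃ g ∈ S, PInv f g)
    (hα : alphaShift ∈ S) (hβ : betaShift ∈ S) :
    (∀ b ∈ S, ∃ γ ∈ S, ∃ δ ∈ S, PComp γ (PComp b δ) = pid) ∧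
    (∀ I : Set (ℕ → Option ℕ), I ⊆ S → I.Nonempty →
      (∀ s ∈ S, ∀ x ∈ I, PComp s x ∈ I ∧ PComp x s ∈ I) → I = S) := by
  have main : ∀ b ∈ S, ∃ γ ∈ S, ∃ δ ∈ S, PComp γ (PComp b δ) = pid := by
    intro b hbS
    obtain ⟨K, c, hKc⟩ := ialmost_eventually (hsub b hbS)
    refine ⟨PPow alphaShift K, ppow_mem hid hmul hα K,
      PPow betaShift c, ppow_mem hid hmul hβ c, ?_⟩
    funext n
    simp only [PComp, alpha_pow, Option.bind_some, hKc, beta_pow]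
    simp [pid]
  refine ⟨main, ?_⟩
  intro I hIS ⟨x, hxI⟩ hideal
  obtain ⟨γ, hγ, δ, hδ, hcomp⟩ := main x (hIS hxI)
  have h1 : PComp x δ ∈ I := (hideal δ hδ x hxI).2
  have h2 : pid ∈ I := by
    rw [← hcomp]; exact (hideal γ hγ _ h1).1
  apply Set.Subset.antisymm hIS
  intro s hsS
  have : PComp s pid = s := by
    funext n; cases h : s n <;> simp [PComp, pid, h]
  rw [← this]
  exact (hideal s hsS pid h2).1
end

section
/- For every element α of I∞⇗(ℕ) there is a smallest n ∈ dom α such that the restriction of α to [n) = {m ∈ ℕ : m ≥ n} is a translation: there exists an integer k with α(m) = m + k for all m ≥ n in dom α, and [n) ⊆ dom α. -/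
/-- Every element of `I∞⇗(ℕ)` agrees with a translation `m ↦ m + k` on a terminal
segment `[n) ⊆ dom α` of ℕ, and there is a smallest such `n` (which lies in `dom α`). -/
theorem stmt12 (f : ℕ → Option ℕ) (hf : IAlmost f) :
    ∃ n : ℕ,
      (∃ k : ℤ, ∀ m, n ≤ m → ∃ c, f m = some c ∧ (c : ℤ) = (m : ℤ) + k) ∧
      (∀ n' : ℕ, (∃ k : ℤ, ∀ m, n' ≤ m → ∃ c, f m = some c ∧ (c : ℤ) = (m : ℤ) + k) →
        n ≤ n') := by
  classical
  obtain ⟨hinj, ⟨hDc, hRc⟩, A, hA, hmono⟩ := hf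
  obtain ⟨B1, hB1⟩ := (hA.union hDc).bddAbove
  set M := B1 + 1 with hMdef
  have hdom : ∀ m, M ≤ m → ∃ c, f m = some c := by
    intro m hm
    rcases h : f m with _ | c
    · exfalso
      have hmem : m ∈ A ∪ (pdom f)ᶜ := Or.inr (by simp [pdom, h])
      have := hB1 hmem
      omega
    · exact ⟨c, rfl⟩
  have hAout : ∀ m, M ≤ m → m ∉ A := by
    intro m hm hmem
    have := hB1 (Or.inl hmem); omega
  have mono' : ∀ a b c d, M ≤ a → a < b → f a = some c → f b = some d → c < d := by
    intro a b c d ha hab hfa hfb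
    exact hmono a b c d (hAout a ha) (hAout b (by omega)) hfa hfb hab
  have mono'' : ∀ a b c d, M ≤ a → a ≤ b → f a = some c → f b = some d → c ≤ d := by
    intro a b c d ha hab hfa hfb
    rcases eq_or_lt_of_le hab with rfl | h
    · rw [hfa] at hfb; injection hfb with h; omega
    · exact le_of_lt (mono' a b c d ha h hfa hfb)
  obtain ⟨c0, hc0⟩ := hdom M le_rfl
  have grow : ∀ t, ∃ c, f (M + t) = some c ∧ c0 + t ≤ c := by
    intro t
    induction t with
    | zero => exact ⟨c0, by simpa using hc0, by omega⟩
    | succ t ih =>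
      obtain ⟨c, hc, hle⟩ := ih
      obtain ⟨d, hd⟩ := hdom (M + (t + 1)) (by omega)
      have := mono' (M + t) (M + (t + 1)) c d (by omega) (by omega) hc hd
      exact ⟨d, hd, by omega⟩
  have hTfin : {v | ∃ a, a < M ∧ f a = some v}.Finite := by
    apply Set.Finite.subset ((Set.finite_Iio M).image (fun a => (f a).getD 0))
    rintro v ⟨a, ha, hfa⟩
    exact ⟨a, ha, by simp [hfa]⟩
  obtain ⟨B2, hB2⟩ := hTfin.bddAbove
  obtain ⟨B3, hB3⟩ := hRc.bddAbove
  obtain ⟨cN, hcN, hcNge⟩ := grow (B2 + B3 + 1)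
  set N := M + (B2 + B3 + 1) with hNdef
  have hbig : ∀ m c, N ≤ m → f m = some c → B2 < c ∧ B3 < c := by
    intro m c hm hfc
    have := mono'' N m cN c (by omega) hm hcN hfc
    omega
  have hran : ∀ v, B3 < v → ∃ a, f a = some v := by
    intro v hv
    by_contra h
    push_neg at h
    have hmem : v ∈ (pran f)ᶜ := by
      simp only [Set.mem_compl_iff, pran, Set.mem_setOf_eq, not_exists]
      exact h
    have := hB3 hmem; omega
  have step : ∀ m c, N ≤ m → f m = some c → f (m + 1) = some (c + 1) := by
    intro m c hm hfc
    obtain ⟨hB2c, hB3c⟩ := hbig m c hm hfc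
    obtain ⟨d, hd⟩ := hdom (m + 1) (by omega)
    have hcd : c < d := mono' m (m + 1) c d (by omega) (by omega) hfc hd
    obtain ⟨a, ha⟩ := hran (c + 1) (by omega)
    have haM : M ≤ a := by
      by_contra h
      push_neg at h
      have hmem : c + 1 ∈ {v | ∃ a, a < M ∧ f a = some v} := ⟨a, h, ha⟩
      have := hB2 hmem; omega
    have ham : m < a := by
      by_contra h
      push_neg at h
      have := mono'' a m (c + 1) c haM h ha hfc
      omega
    have ham1 : a ≤ m + 1 := by
      by_contra h
      push_neg at h
      have := mono' (m + 1) a d (c + 1) (by omega) h hd ha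
      omega
    have haeq : a = m + 1 := by omega
    rw [haeq] at ha
    exact ha
  have key : ∀ t, f (N + t) = some (cN + t) := by
    intro t
    induction t with
    | zero => simpa using hcN
    | succ t ih =>
      have := step (N + t) (cN + t) (by omega) ih
      simpa [Nat.add_assoc] using this
  have hP : ∃ n, (∃ k : ℤ, ∀ m, n ≤ m → ∃ c, f m = some c ∧ (c : ℤ) = (m : ℤ) + k) := by
    refine ⟨N, (cN : ℤ) - (N : ℤ), fun m hm => ?_⟩
    obtain ⟨t, rfl⟩ := Nat.exists_eq_add_of_le hm
    exact ⟨cN + t, key t, by push_cast; ring⟩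
  exact ⟨Nat.find hP, Nat.find_spec hP, fun n' h => Nat.find_le h⟩
end

section
/- Define F: I∞⇗(ℕ) → ℤ by F(α) = α(n) − n for any sufficiently large n ∈ dom α (α eventually acts as a translation by a constant). Then F is well-defined and is a monoid homomorphism from (I∞⇗(ℕ), ∘) to the additive group of integers (ℤ, +). -/
/-- eventual translation by k -/
def PTrans (f : ℕ → Option ℕ) (k : ℤ) : Prop :=
  ∃ N : ℕ, ∀ m ≥ N, ∃ c, f m = some c ∧ (c : ℤ) = (m : ℤ) + k

lemma ptrans_unique {f k k'} (h : PTrans f k) (h' : PTrans f k') : k = k' := by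
  obtain ⟨N, hN⟩ := h
  obtain ⟨N', hN'⟩ := h'
  obtain ⟨c, hc, hck⟩ := hN (max N N') (le_max_left _ _)
  obtain ⟨c', hc', hck'⟩ := hN' (max N N') (le_max_right _ _)
  rw [hc] at hc'
  injection hc' with h
  omega

lemma ptrans_exists {f} (hf : IAlmost f) : ∃ k, PTrans f k := by
  obtain ⟨hinj, ⟨hdc, hrc⟩, A, hA, hmono⟩ := hf
  -- N₀ : beyond A and beyond the complement of the domain
  obtain ⟨B, hB⟩ := (hA.union hdc).bddAbove
  set N₀ := B + 1 with hN₀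
  have hN₀A : ∀ m ≥ N₀, m ∉ A := by
    intro m hm hmA
    have : m ≤ B := hB (Or.inl hmA); omega
  have hN₀d : ∀ m ≥ N₀, ∃ c, f m = some c := by
    intro m hm
    by_cases h : f m = none
    · have : m ≤ B := hB (Or.inr (not_not_intro h)); omega
    · exact Option.ne_none_iff_exists'.mp h
  set fv : ℕ → ℕ := fun m => (f m).getD 0 with hfv
  have hfveq : ∀ m ≥ N₀, f m = some (fv m) := by
    intro m hm; obtain ⟨c, hc⟩ := hN₀d m hm; simp [hfv, hc]
  have hmono' : ∀ a b, N₀ ≤ a → a < b → fv a < fv b := by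
    intro a b ha hab
    exact hmono a b _ _ (hN₀A a ha) (hN₀A b (by omega)) (hfveq a ha)
      (hfveq b (by omega)) hab
  -- fv grows at least linearly on the tail
  have hgrow : ∀ a, N₀ ≤ a → ∀ i, fv a + i ≤ fv (a + i) := by
    intro a ha i
    induction i with
    | zero => simp
    | succ n ih =>
      have h1 := hmono' (a + n) (a + n + 1) (by omega) (by omega)
      have h2 : fv (a + (n + 1)) = fv (a + n + 1) := rfl
      omega
  -- counting bound
  set U : Finset ℕ := hrc.toFinset ∪ (Finset.range N₀).image fv with hU
  have hbound : ∀ m ≥ N₀, fv m ≤ fv N₀ + (m - N₀ + 1) + U.card := by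
    intro m hm
    set J : Finset ℕ := (Finset.Icc N₀ m).image fv with hJ
    have hJcard : J.card ≤ m - N₀ + 1 := by
      calc J.card ≤ (Finset.Icc N₀ m).card := Finset.card_image_le
        _ = m - N₀ + 1 := by rw [Nat.card_Icc]; omega
    set T : Finset ℕ := Finset.Ioc (fv N₀) (fv m) \ J with hT
    have hTsub : T ⊆ U := by
      intro v hv
      rw [hT, Finset.mem_sdiff, Finset.mem_Ioc] at hv
      obtain ⟨⟨hv1, hv2⟩, hvJ⟩ := hv
      by_cases hvr : v ∈ pran f
      · obtain ⟨x, hx⟩ := hvr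
        have hfvx : fv x = v := by rw [hfv]; simp [hx]
        by_cases hxN : N₀ ≤ x
        · rcases le_or_gt x m with hxm | hxm
          · exact absurd (Finset.mem_image.mpr ⟨x, Finset.mem_Icc.mpr ⟨hxN, hxm⟩, hfvx⟩) hvJ
          · have := hmono' m x hm hxm
            omega
        · rw [hU]
          exact Finset.mem_union_right _
            (Finset.mem_image.mpr ⟨x, Finset.mem_range.mpr (by omega), hfvx⟩)
      · rw [hU]
        exact Finset.mem_union_left _ (hrc.mem_toFinset.mpr hvr)
    have hTcard : (Finset.Ioc (fv N₀) (fv m)).card - J.card ≤ T.card :=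
      Finset.le_card_sdiff _ _
    have hIoc : (Finset.Ioc (fv N₀) (fv m)).card = fv m - fv N₀ := by
      rw [Nat.card_Ioc]
    have := Finset.card_le_card hTsub
    omega
  -- h m := fv m - m is nondecreasing and bounded on the tail; it stabilizes
  by_contra hcon
  simp only [PTrans, not_exists] at hcon
  push_neg at hcon
  -- from non-stabilization, the excess fv m - (m + fv N₀ - N₀) can be made arbitrarily large
  have key : ∀ j : ℕ, ∃ m ≥ N₀, fv N₀ + (m - N₀) + j ≤ fv m := by
    intro j
    induction j with
    | zero => exact ⟨N₀, le_refl _, by simp⟩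
    | succ n ih =>
      obtain ⟨m, hm, hmle⟩ := ih
      obtain ⟨m', hm', hne⟩ := hcon ((fv m : ℤ) - m) m
      rcases eq_or_lt_of_le hm' with rfl | hlt
      · exact absurd (by ring : ((fv m : ℤ)) = (m : ℤ) + ((fv m : ℤ) - m)) (hne _ (hfveq m hm))
      · refine ⟨m', by omega, ?_⟩
        have hg := hgrow m hm (m' - m)
        rw [show m + (m' - m) = m' by omega] at hg
        -- either fv m' jumps by more than m' - m somewhere; show fv m' ≥ fv m + (m'-m) + ?
        -- we need strictness: fv m' ≠ fv m + (m' - m)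
        have heq := hne _ (hfveq m' (by omega))
        omega
  obtain ⟨m, hm, hle⟩ := key (U.card + 2)
  have := hbound m hm
  omega

open Classical in
noncomputable def Fdef : (ℕ → Option ℕ) → ℤ := fun f =>
  if h : ∃ k, PTrans f k then h.choose else 0

lemma Fdef_spec {f} (h : ∃ k, PTrans f k) : PTrans f (Fdef f) := by
  simp only [Fdef]; rw [dif_pos h]; exact h.choose_spec

lemma Fdef_eq {f k} (h : PTrans f k) : Fdef f = k :=
  ptrans_unique (Fdef_spec ⟨k, h⟩) h

/-- The map sending `α ∈ I∞⇗(ℕ)` to its eventual translation constant is well defined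
and is a monoid homomorphism to the additive group of integers. -/
theorem stmt13 :
    ∃ F : (ℕ → Option ℕ) → ℤ,
      (∀ f, IAlmost f → ∃ N : ℕ, ∀ m ≥ N, ∃ c, f m = some c ∧ (c : ℤ) = (m : ℤ) + F f) ∧
      F pid = 0 ∧
      (∀ f g, IAlmost f → IAlmost g → F (PComp f g) = F f + F g) := by
  refine ⟨Fdef, ?_, ?_, ?_⟩
  · intro f hf
    exact Fdef_spec (ptrans_exists hf)
  · exact Fdef_eq ⟨0, fun m _ => ⟨m, rfl, by simp⟩⟩
  · intro f g hf hg
    have hF := Fdef_spec (ptrans_exists hf)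
    have hG := Fdef_spec (ptrans_exists hg)
    obtain ⟨Nf, hNf⟩ := hF
    obtain ⟨Ng, hNg⟩ := hG
    apply Fdef_eq
    refine ⟨max Nf (Ng + (Fdef f).natAbs), fun m hm => ?_⟩
    obtain ⟨c, hc, hck⟩ := hNf m (le_trans (le_max_left _ _) hm)
    have hcNg : Ng ≤ c := by
      have h1 : Ng + (Fdef f).natAbs ≤ m := le_trans (le_max_right _ _) hm
      omega
    obtain ⟨d, hd, hdk⟩ := hNg c hcNg
    exact ⟨d, by rw [PComp, hc, Option.bind_some, hd], by omega⟩
end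

section
/- Let S be an inverse submonoid of I∞⇗(ℕ) containing the bicyclic submonoid C_ℕ. Define the relation α ∼ β iff there exists an idempotent e ∈ S with α e = β e (the least group congruence). Then α ∼ β if and only if α and β have the same eventual translation constant, i.e., α(n) − n = β(n) − n for all sufficiently large n; consequently the quotient S/∼ is isomorphic to the additive group of integers ℤ. -/
/-- `f` eventually translates by `k`. -/
def HasK (f : ℕ → Option ℕ) (k : ℤ) : Prop :=
  ∃ N : ℕ, ∀ n ≥ N, ∃ c, f n = some c ∧ (c : ℤ) = (n : ℤ) + k

lemma hasK_unique {f : ℕ → Option ℕ} {k₁ k₂ : ℤ}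
    (h₁ : HasK f k₁) (h₂ : HasK f k₂) : k₁ = k₂ := by
  obtain ⟨N₁, h₁⟩ := h₁
  obtain ⟨N₂, h₂⟩ := h₂
  obtain ⟨c, hc, hck⟩ := h₁ (N₁ + N₂) (by omega)
  obtain ⟨c', hc', hck'⟩ := h₂ (N₁ + N₂) (by omega)
  rw [hc] at hc'
  injection hc' with h
  subst h
  omega

/-- Every element of `I∞⇗(ℕ)` has an eventual translation constant. -/
lemma exists_hasK (f : ℕ → Option ℕ) (hf : IAlmost f) : ∃ k, HasK f k := by
  obtain ⟨hinj, ⟨hdom, hran⟩, A, hA, hmono⟩ := hf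
  obtain ⟨B, hB⟩ := (hA.union hdom).bddAbove
  set N0 := B + 1 with hN0
  have hgood : ∀ n, N0 ≤ n → n ∉ A ∧ f n ≠ none := by
    intro n hn
    constructor
    · intro hmem
      have := hB (Set.mem_union_left _ hmem); omega
    · intro hmem
      have := hB (Set.mem_union_right _ (show n ∈ (pdom f)ᶜ from fun h => h hmem)); omega
  set g : ℕ → ℕ := fun n => (f n).getD 0 with hg
  have hfg : ∀ n, N0 ≤ n → f n = some (g n) := by
    intro n hn
    have := (hgood n hn).2
    cases h : f n with
    | none => exact absurd h this
    | some c => simp [hg, h]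
  have hgmono : ∀ m n, N0 ≤ m → m < n → g m < g n := by
    intro m n hm hlt
    exact hmono m n (g m) (g n) (hgood m hm).1 (hgood n (by omega)).1
      (hfg m hm) (hfg n (by omega)) hlt
  have hkey : ∀ m, N0 ≤ m → ∀ d, g m + d ≤ g (m + d) := by
    intro m hm d
    induction d with
    | zero => simp
    | succ d ih =>
      have := hgmono (m + d) (m + d + 1) (by omega) (by omega)
      show g m + (d + 1) ≤ g (m + d + 1)
      omega
  classical
  set ranC : Finset ℕ := hran.toFinset with hranC
  have hbound : ∀ n, N0 ≤ n → g n ≤ g N0 + (n - N0) + ranC.card + N0 := by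
    intro n hn
    have hsubset : Finset.Icc (g N0) (g n) ⊆
        (Finset.Icc N0 n).image g ∪ ranC ∪ (Finset.range N0).image g := by
      intro c hc
      rw [Finset.mem_Icc] at hc
      by_cases hcr : c ∈ pran f
      · obtain ⟨m, hm⟩ := hcr
        by_cases hmN : N0 ≤ m
        · have hgm : g m = c := by
            have := hfg m hmN
            rw [hm] at this
            injection this with h
            exact h.symm
          have hmn : m ≤ n := by
            by_contra hcon
            have := hgmono n m hn (by omega)
            omega
          exact Finset.mem_union_left _ (Finset.mem_union_left _
            (Finset.mem_image.2 ⟨m, Finset.mem_Icc.2 ⟨hmN, hmn⟩, hgm⟩))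
        · have hgm : g m = c := by simp [hg, hm]
          exact Finset.mem_union_right _
            (Finset.mem_image.2 ⟨m, Finset.mem_range.2 (by omega), hgm⟩)
      · exact Finset.mem_union_left _ (Finset.mem_union_right _
          (hran.mem_toFinset.2 hcr))
    have hcard := Finset.card_le_card hsubset
    have h1 : (Finset.Icc (g N0) (g n)).card = g n + 1 - g N0 := Nat.card_Icc _ _
    have h2 : ((Finset.Icc N0 n).image g ∪ ranC ∪ (Finset.range N0).image g).card
        ≤ (n + 1 - N0) + ranC.card + N0 := by
      calc ((Finset.Icc N0 n).image g ∪ ranC ∪ (Finset.range N0).image g).card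
          ≤ ((Finset.Icc N0 n).image g ∪ ranC).card
            + ((Finset.range N0).image g).card := Finset.card_union_le _ _
        _ ≤ ((Finset.Icc N0 n).image g).card + ranC.card
            + ((Finset.range N0).image g).card := by
            have := Finset.card_union_le ((Finset.Icc N0 n).image g) ranC
            omega
        _ ≤ (n + 1 - N0) + ranC.card + N0 := by
            have i1 := Finset.card_image_le (s := Finset.Icc N0 n) (f := g)
            have i2 := Finset.card_image_le (s := Finset.range N0) (f := g)
            rw [Nat.card_Icc] at i1
            rw [Finset.card_range] at i2
            omega
    have hge : g N0 ≤ g n := by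
      have := hkey N0 le_rfl (n - N0)
      have heq : N0 + (n - N0) = n := by omega
      rw [heq] at this
      omega
    omega
  -- the eventual difference
  have hBdd : ∃ b : ℤ, ∀ z : ℤ, (∃ n, N0 ≤ n ∧ z = (g n : ℤ) - n) → z ≤ b := by
    refine ⟨(g N0 : ℤ) + ranC.card, ?_⟩
    rintro z ⟨n, hn, rfl⟩
    have := hbound n hn
    omega
  obtain ⟨k, ⟨n₀, hn₀, hk⟩, hmax⟩ := Int.exists_greatest_of_bdd hBdd ⟨_, N0, le_rfl, rfl⟩
  refine ⟨k, n₀, fun n hn => ⟨g n, hfg n (by omega), ?_⟩⟩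
  have h1 : (g n : ℤ) - n ≤ k := hmax _ ⟨n, by omega, rfl⟩
  have h2 : g n₀ + (n - n₀) ≤ g n := by
    have := hkey n₀ hn₀ (n - n₀)
    have heq : n₀ + (n - n₀) = n := by omega
    rwa [heq] at this
  omega

open Classical in
/-- The eventual translation constant. -/
noncomputable def Fk (f : ℕ → Option ℕ) : ℤ :=
  if h : ∃ k, HasK f k then h.choose else 0

lemma Fk_eq {f : ℕ → Option ℕ} {k : ℤ} (h : HasK f k) : Fk f = k := by
  have he : ∃ k, HasK f k := ⟨k, h⟩
  rw [Fk, dif_pos he]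
  exact hasK_unique he.choose_spec h

lemma hasK_comp {a b : ℕ → Option ℕ} {ka kb : ℤ}
    (ha : HasK a ka) (hb : HasK b kb) : HasK (PComp a b) (ka + kb) := by
  obtain ⟨Na, ha⟩ := ha
  obtain ⟨Nb, hb⟩ := hb
  refine ⟨Na + Nb + ka.natAbs, fun n hn => ?_⟩
  obtain ⟨c, hc, hck⟩ := ha n (by omega)
  have hcNb : Nb ≤ c := by omega
  obtain ⟨d, hd, hdk⟩ := hb c hcNb
  refine ⟨d, ?_, by omega⟩
  simp [PComp, hc, hd]

lemma ppow_alpha (m n : ℕ) : PPow alphaShift m n = some (n + m) := by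
  induction m with
  | zero => simp [PPow, pid]
  | succ m ih =>
    show (PPow alphaShift m n).bind alphaShift = _
    rw [ih]
    simp [alphaShift]
    omega

lemma ppow_beta_ge (m n : ℕ) (h : m ≤ n) : PPow betaShift m n = some (n - m) := by
  induction m with
  | zero => simp [PPow, pid]
  | succ m ih =>
    show (PPow betaShift m n).bind betaShift = _
    rw [ih (by omega)]
    have h0 : n - m ≠ 0 := by omega
    simp only [Option.bind, betaShift, if_neg h0]
    have h1 : n - m - 1 = n - (m + 1) := by omega
    rw [h1]

lemma ppow_beta_lt (m n : ℕ) (h : n < m) : PPow betaShift m n = none := by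
  induction m with
  | zero => omega
  | succ m ih =>
    show (PPow betaShift m n).bind betaShift = _
    by_cases hnm : n < m
    · rw [ih hnm]; rfl
    · have : n = m := by omega
      subst this
      rw [ppow_beta_ge n n le_rfl]
      simp [betaShift]

/-- Partial identity on `[M, ∞)`. -/
noncomputable def eM (M : ℕ) : ℕ → Option ℕ :=
  PComp (PPow betaShift M) (PPow alphaShift M)

lemma eM_ge {M n : ℕ} (h : M ≤ n) : eM M n = some n := by
  show (PPow betaShift M n).bind (PPow alphaShift M) = some n
  rw [ppow_beta_ge M n h]
  simp only [Option.bind, ppow_alpha]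
  congr 1
  omega

lemma eM_lt {M n : ℕ} (h : n < M) : eM M n = none := by
  show (PPow betaShift M n).bind (PPow alphaShift M) = none
  rw [ppow_beta_lt M n h]
  rfl

lemma eM_idem (M : ℕ) : PComp (eM M) (eM M) = eM M := by
  funext n
  by_cases h : M ≤ n
  · show (eM M n).bind (eM M) = eM M n
    rw [eM_ge h]
    exact eM_ge h
  · show (eM M n).bind (eM M) = eM M n
    rw [eM_lt (by omega)]
    rfl

/-- For an inverse submonoid `S` of `I∞⇗(ℕ)` containing `C_ℕ`, the least group
congruence `α ∼ β ⇔ αe = βe` for some idempotent `e ∈ S` holds iff `α` and `β` have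
the same eventual translation constant; consequently `S/∼` is isomorphic to `ℤ(+)`. -/
theorem stmt14 (S : Set (ℕ → Option ℕ))
    (hsub : ∀ f ∈ S, IAlmost f) (hid : pid ∈ S)
    (hmul : ∀ f ∈ S, ∀ g ∈ S, PComp f g ∈ S)
    (hinv : ∀ f ∈ S, ∃ g ∈ S, PInv f g)
    (hα : alphaShift ∈ S) (hβ : betaShift ∈ S) :
    (∀ a ∈ S, ∀ b ∈ S,
      ((∃ e ∈ S, PComp e e = e ∧ PComp a e = PComp b e) ↔
        ∃ k : ℤ, ∃ N : ℕ, ∀ n ≥ N,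
          (∃ c, a n = some c ∧ (c : ℤ) = (n : ℤ) + k) ∧
          (∃ c, b n = some c ∧ (c : ℤ) = (n : ℤ) + k))) ∧
    ∃ F : (ℕ → Option ℕ) → ℤ,
      (∀ a ∈ S, ∀ b ∈ S, F (PComp a b) = F a + F b) ∧
      (∀ a ∈ S, ∀ b ∈ S,
        ((∃ e ∈ S, PComp e e = e ∧ PComp a e = PComp b e) ↔ F a = F b)) ∧
      (∀ k : ℤ, ∃ a ∈ S, F a = k) := by
  classical
  have hk : ∀ f ∈ S, ∃ k, HasK f k := fun f hf => exists_hasK f (hsub f hf)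
  have ppow_mem : ∀ f ∈ S, ∀ m, PPow f m ∈ S := by
    intro f hf m
    induction m with
    | zero => exact hid
    | succ m ih => exact hmul _ ih _ hf
  have heMS : ∀ M, eM M ∈ S := fun M => hmul _ (ppow_mem _ hβ M) _ (ppow_mem _ hα M)
  have main : ∀ a ∈ S, ∀ b ∈ S,
      ((∃ e ∈ S, PComp e e = e ∧ PComp a e = PComp b e) ↔
        ∃ k, HasK a k ∧ HasK b k) := by
    intro a ha b hb
    constructor
    · rintro ⟨e, heS, hee, hab⟩
      obtain ⟨ka, hka⟩ := hk a ha
      obtain ⟨kb, hkb⟩ := hk b hb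
      have hpinj : PInj e := (hsub e heS).1
      have hpid' : ∀ n c, e n = some c → c = n := by
        intro n c hc
        have h1 : (e n).bind e = e n := congrFun hee n
        rw [hc] at h1
        have h2 : e c = some c := h1
        exact hpinj c n c h2 hc
      obtain ⟨hedom, _⟩ := (hsub e heS).2.1
      obtain ⟨B, hB⟩ := hedom.bddAbove
      have heid : ∀ m, B + 1 ≤ m → e m = some m := by
        intro m hm
        cases hcm : e m with
        | none =>
          have hmem : m ∈ (pdom e)ᶜ := fun h => h hcm
          have := hB hmem
          omega
        | some c =>
          exact congrArg some (hpid' m c hcm)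
      obtain ⟨Na, hNa⟩ := hka
      obtain ⟨Nb, hNb⟩ := hkb
      set n := Na + Nb + B + 1 + ka.natAbs + kb.natAbs with hn
      obtain ⟨ca, hca, hcka⟩ := hNa n (by omega)
      obtain ⟨cb, hcb, hckb⟩ := hNb n (by omega)
      have h1 : PComp a e n = some ca := by
        show (a n).bind e = some ca
        rw [hca]
        exact heid ca (by omega)
      have h2 : PComp b e n = some cb := by
        show (b n).bind e = some cb
        rw [hcb]
        exact heid cb (by omega)
      rw [hab, h2] at h1
      injection h1 with heq
      have hkk : kb = ka := by omega
      exact ⟨ka, ⟨Na, hNa⟩, hkk ▸ ⟨Nb, hNb⟩⟩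
    · rintro ⟨k, ⟨Na, hNa⟩, ⟨Nb, hNb⟩⟩
      set N := Na + Nb with hN
      have habeq : ∀ n, N ≤ n → a n = b n := by
        intro n hn
        obtain ⟨c, hc, hck⟩ := hNa n (by omega)
        obtain ⟨c', hc', hck'⟩ := hNb n (by omega)
        rw [hc, hc']
        congr 1
        omega
      set M := N + (Finset.range N).sup (fun n => max ((a n).getD 0) ((b n).getD 0)) + 1
        with hM
      refine ⟨eM M, heMS M, eM_idem M, ?_⟩
      funext n
      show (a n).bind (eM M) = (b n).bind (eM M)
      by_cases hn : N ≤ n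
      · rw [habeq n hn]
      · have hsup : max ((a n).getD 0) ((b n).getD 0)
            ≤ (Finset.range N).sup (fun n => max ((a n).getD 0) ((b n).getD 0)) :=
          Finset.le_sup (f := fun n => max ((a n).getD 0) ((b n).getD 0))
            (Finset.mem_range.2 (show n < N by omega))
        have haM : ∀ c, a n = some c → c < M := by
          intro c hc
          have hgd : (a n).getD 0 = c := by rw [hc]; rfl
          omega
        have hbM : ∀ c, b n = some c → c < M := by
          intro c hc
          have hgd : (b n).getD 0 = c := by rw [hc]; rfl
          omega
        cases hca : a n with
        | none =>
          cases hcb : b n with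
          | none => rfl
          | some c =>
            show none = eM M c
            rw [eM_lt (hbM c hcb)]
        | some c =>
          cases hcb : b n with
          | none =>
            show eM M c = none
            rw [eM_lt (haM c hca)]
          | some c' =>
            show eM M c = eM M c'
            rw [eM_lt (haM c hca), eM_lt (hbM c' hcb)]
  constructor
  · intro a ha b hb
    rw [main a ha b hb]
    constructor
    · rintro ⟨k, ⟨Na, hNa⟩, ⟨Nb, hNb⟩⟩
      exact ⟨k, max Na Nb, fun n hn => ⟨hNa n (by omega), hNb n (by omega)⟩⟩
    · rintro ⟨k, N, h⟩
      exact ⟨k, ⟨N, fun n hn => (h n hn).1⟩, ⟨N, fun n hn => (h n hn).2⟩⟩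
  · refine ⟨Fk, ?_, ?_, ?_⟩
    · intro a ha b hb
      obtain ⟨ka, hka⟩ := hk a ha
      obtain ⟨kb, hkb⟩ := hk b hb
      rw [Fk_eq hka, Fk_eq hkb, Fk_eq (hasK_comp hka hkb)]
    · intro a ha b hb
      rw [main a ha b hb]
      constructor
      · rintro ⟨k, h1, h2⟩
        rw [Fk_eq h1, Fk_eq h2]
      · intro h
        obtain ⟨ka, hka⟩ := hk a ha
        obtain ⟨kb, hkb⟩ := hk b hb
        have hkk : kb = ka := by rw [← Fk_eq hka, ← Fk_eq hkb, h]
        exact ⟨ka, hka, hkk ▸ hkb⟩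
    · intro k
      by_cases hk0 : 0 ≤ k
      · refine ⟨PPow alphaShift k.toNat, ppow_mem _ hα _, ?_⟩
        have hh : HasK (PPow alphaShift k.toNat) (k.toNat : ℤ) :=
          ⟨0, fun n _ => ⟨n + k.toNat, ppow_alpha _ _, by push_cast; ring⟩⟩
        rw [Fk_eq hh]
        omega
      · refine ⟨PPow betaShift (-k).toNat, ppow_mem _ hβ _, ?_⟩
        have hh : HasK (PPow betaShift (-k).toNat) (-((-k).toNat : ℤ)) :=
          ⟨(-k).toNat, fun n hn => ⟨n - (-k).toNat, ppow_beta_ge _ _ hn, by omega⟩⟩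
        rw [Fk_eq hh]
        omega
end

section
/- Let S be a dense discrete subsemigroup of a T1 semitopological semigroup T, and suppose that for all α, γ ∈ S the sets {χ ∈ S : α χ = γ} and {χ ∈ S : χ α = γ} are finite. If I = T \ S is nonempty then I is a two-sided ideal of T. -/
/-- If a dense discrete subsemigroup `S` of a `T1` semitopological semigroup `T` has the
property that all translation equations over `S` have finitely many solutions, then the
nonempty remainder `T \ S` is a two-sided ideal of `T`. -/
theorem stmt17 {T : Type*} [TopologicalSpace T] [Semigroup T] [T1Space T]
    (hl : ∀ a : T, Continuous fun x => a * x)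
    (hr : ∀ a : T, Continuous fun x => x * a)
    (S : Set T) (hmulS : ∀ a ∈ S, ∀ b ∈ S, a * b ∈ S)
    (hdense : Dense S)
    (hdisc : ∀ x ∈ S, ∃ U : Set T, IsOpen U ∧ U ∩ S = {x})
    (hfin : ∀ a ∈ S, ∀ c ∈ S,
      {x ∈ S | a * x = c}.Finite ∧ {x ∈ S | x * a = c}.Finite)
    (hne : Sᶜ.Nonempty) :
    ∀ x ∈ Sᶜ, ∀ t : T, t * x ∈ Sᶜ ∧ x * t ∈ Sᶜ := by
  intro x hx t
  -- Every open neighborhood of a point outside S meets S in an infinite set.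
  have hinf : ∀ V : Set T, IsOpen V → x ∈ V → (V ∩ S).Infinite := by
    intro V hV hxV hfinVS
    have hopen : IsOpen (V \ (V ∩ S)) := hV.sdiff hfinVS.isClosed
    have hxm : x ∈ V \ (V ∩ S) := ⟨hxV, fun h => hx h.2⟩
    obtain ⟨s, hs1, hs2⟩ := hdense.inter_open_nonempty _ hopen ⟨x, hxm⟩
    exact hs1.2 ⟨hs1.1, hs2⟩
  -- For a ∈ S, a * x ∉ S.
  have stepL : ∀ a ∈ S, a * x ∉ S := by
    intro a ha hc
    obtain ⟨U, hU, hUS⟩ := hdisc (a * x) hc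
    have hmem : a * x ∈ U ∩ S := by rw [hUS]; rfl
    have hV : IsOpen ((fun y => a * y) ⁻¹' U) := (hl a).isOpen_preimage U hU
    have hxV : x ∈ (fun y => a * y) ⁻¹' U := hmem.1
    refine hinf _ hV hxV (((hfin a ha (a * x) hc).1).subset ?_)
    intro s ⟨hsV, hsS⟩
    have : a * s ∈ U ∩ S := ⟨hsV, hmulS a ha s hsS⟩
    rw [hUS] at this
    exact ⟨hsS, this⟩
  -- For a ∈ S, x * a ∉ S.
  have stepR : ∀ a ∈ S, x * a ∉ S := by
    intro a ha hc
    obtain ⟨U, hU, hUS⟩ := hdisc (x * a) hc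
    have hmem : x * a ∈ U ∩ S := by rw [hUS]; rfl
    have hV : IsOpen ((fun y => y * a) ⁻¹' U) := (hr a).isOpen_preimage U hU
    have hxV : x ∈ (fun y => y * a) ⁻¹' U := hmem.1
    refine hinf _ hV hxV (((hfin a ha (x * a) hc).2).subset ?_)
    intro s ⟨hsV, hsS⟩
    have : s * a ∈ U ∩ S := ⟨hsV, hmulS s hsS a ha⟩
    rw [hUS] at this
    exact ⟨hsS, this⟩
  constructor
  · intro hc
    obtain ⟨U, hU, hUS⟩ := hdisc (t * x) hc
    have hmem : t * x ∈ U ∩ S := by rw [hUS]; rfl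
    have hW : IsOpen ((fun w => w * x) ⁻¹' U) := (hr x).isOpen_preimage U hU
    obtain ⟨a, haW, haS⟩ := hdense.inter_open_nonempty _ hW ⟨t, hmem.1⟩
    have h1 : a * x ∉ S := stepL a haS
    have hne' : a * x ∉ ({t * x} : Set T) := fun h => h1 (h ▸ hc)
    have hopen' : IsOpen (U \ {t * x}) := hU.sdiff isClosed_singleton
    obtain ⟨s, ⟨hsU, hsne⟩, hsS⟩ :=
      hdense.inter_open_nonempty _ hopen' ⟨a * x, haW, hne'⟩
    have : s ∈ U ∩ S := ⟨hsU, hsS⟩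
    rw [hUS] at this
    exact hsne this
  · intro hc
    obtain ⟨U, hU, hUS⟩ := hdisc (x * t) hc
    have hmem : x * t ∈ U ∩ S := by rw [hUS]; rfl
    have hW : IsOpen ((fun w => x * w) ⁻¹' U) := (hl x).isOpen_preimage U hU
    obtain ⟨a, haW, haS⟩ := hdense.inter_open_nonempty _ hW ⟨t, hmem.1⟩
    have h1 : x * a ∉ S := stepR a haS
    have hne' : x * a ∉ ({x * t} : Set T) := fun h => h1 (h ▸ hc)
    have hopen' : IsOpen (U \ {x * t}) := hU.sdiff isClosed_singleton
    obtain ⟨s, ⟨hsU, hsne⟩, hsS⟩ :=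
      hdense.inter_open_nonempty _ hopen' ⟨x * a, haW, hne'⟩
    have : s ∈ U ∩ S := ⟨hsU, hsS⟩
    rw [hUS] at this
    exact hsne this
end

section
/- Let S be a countable semigroup that is simple (for every γ ∈ S and some fixed μ ∈ S there exist α, β ∈ S with α γ β = μ) and such that for all α, β ∈ S the equation sets {χ : α χ β = μ} are finite for each μ. Then every Hausdorff shift-continuous Baire topology on S is discrete. -/
/-- A countable simple semigroup in which the sets of solutions of `α χ β = μ` are
finite admits only discrete Hausdorff shift-continuous Baire topologies. -/
theorem stmt18 {S : Type*} [Semigroup S] [Countable S]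
    [TopologicalSpace S] [T2Space S] [BaireSpace S]
    (hl : ∀ a : S, Continuous fun x => a * x)
    (hr : ∀ a : S, Continuous fun x => x * a)
    (hsimple : ∀ γ μ : S, ∃ a b : S, a * γ * b = μ)
    (hfin : ∀ a b μ : S, {x : S | a * x * b = μ}.Finite) :
    DiscreteTopology S := by
  rcases isEmpty_or_nonempty S with hS | hS
  · exact ⟨Subsingleton.elim _ _⟩
  -- find an isolated point
  have hx : ∃ x : S, (interior {x}).Nonempty := by
    have := nonempty_interior_of_iUnion_of_closed
      (f := fun x : S => ({x} : Set S)) (fun x => isClosed_singleton)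
      (by simp [Set.iUnion_of_singleton])
    exact this
  obtain ⟨x₀, hx₀⟩ := hx
  have hopen : IsOpen ({x₀} : Set S) := by
    rcases hx₀ with ⟨y, hy⟩
    have hy' : y ∈ ({x₀} : Set S) := interior_subset hy
    rw [Set.mem_singleton_iff] at hy'
    subst hy'
    have : interior ({y} : Set S) = {y} :=
      Set.Subset.antisymm interior_subset (Set.singleton_subset_iff.mpr hy)
    rw [← this]; exact isOpen_interior
  rw [discreteTopology_iff_isOpen_singleton]
  intro μ
  obtain ⟨a, b, hab⟩ := hsimple μ x₀
  set f : S → S := fun x => a * x * b with hf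
  have hcont : Continuous f := (hr b).comp (hl a)
  have hU : IsOpen (f ⁻¹' {x₀}) := hopen.preimage hcont
  have hUfin : (f ⁻¹' {x₀}).Finite := hfin a b x₀
  have hμ : μ ∈ f ⁻¹' {x₀} := by simp [f, hab]
  have hclosed : IsClosed (f ⁻¹' {x₀} \ {μ}) := (hUfin.diff (t := {μ})).isClosed
  have : ({μ} : Set S) = f ⁻¹' {x₀} \ (f ⁻¹' {x₀} \ {μ}) := by
    ext y
    constructor
    · rintro rfl; exact ⟨hμ, fun h => h.2 rfl⟩
    · rintro ⟨h1, h2⟩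
      by_contra hne
      exact h2 ⟨h1, hne⟩
  rw [this]
  exact hU.sdiff hclosed
end

section
/- The family of sets U_α(F) = {β ∈ Iℕ∞ : dom β ⊆ dom α and β(x) = α(x) for all x ∈ F}, indexed over α ∈ Iℕ∞ and finite F ⊆ dom α, forms a base of a topology τ_W on Iℕ∞ under which composition of partial maps is (jointly) continuous and inversion is continuous; moreover τ_W is not discrete. -/
/-- The inverse monoid `Iℕ∞` of cofinite partial isometries of ℕ. -/
abbrev INf := {f : ℕ → Option ℕ // Isom f}

/-- The basic neighbourhoods `U_α(F)` of the topology `τ_W`. -/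
def UW (a : INf) (F : Finset ℕ) : Set INf :=
  {b | pdom b.val ⊆ pdom a.val ∧ ∀ x ∈ F, b.val x = a.val x}

/-- The family of all basic sets `U_α(F)` with `F` a finite subset of `dom α`. -/
def BW : Set (Set INf) :=
  {s | ∃ (a : INf) (F : Finset ℕ), (↑F : Set ℕ) ⊆ pdom a.val ∧ s = UW a F}

section Aux

lemma exists_large_mem {s : Set ℕ} (hs : sᶜ.Finite) (N : ℕ) : ∃ c ∈ s, N < c := by
  have : s.Infinite := by
    have := hs.infinite_compl
    rwa [compl_compl] at this
  exact this.exists_gt N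

lemma mem_pdom {f : ℕ → Option ℕ} {n : ℕ} (h : n ∈ pdom f) : ∃ m, f n = some m := by
  simpa [pdom, Option.ne_none_iff_exists'] using h

lemma isom_shift {f : ℕ → Option ℕ} (hf : Isom f) {a b c d : ℕ}
    (ha : f a = some c) (hb : f b = some d) : (c : ℤ) - a = (d : ℤ) - b := by
  obtain ⟨-, ⟨hdom, -⟩, hiso⟩ := hf
  obtain ⟨e, he, hgt⟩ := exists_large_mem hdom (a + b + c + d)
  obtain ⟨m, hm⟩ := mem_pdom he
  have h1 := hiso a e c m ha hm
  have h2 := hiso b e d m hb hm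
  rcases abs_cases ((c : ℤ) - m) with ⟨h3, -⟩ | ⟨h3, -⟩ <;>
    rcases abs_cases ((d : ℤ) - m) with ⟨h4, -⟩ | ⟨h4, -⟩ <;>
    rcases abs_cases ((a : ℤ) - e) with ⟨h5, -⟩ | ⟨h5, -⟩ <;>
    rcases abs_cases ((b : ℤ) - e) with ⟨h6, -⟩ | ⟨h6, -⟩ <;>
    omega

lemma restrict_of_agree {a a' : INf} {n₀ y₀ : ℕ}
    (h0 : a.val n₀ = some y₀) (h0' : a'.val n₀ = some y₀)
    (hdom : pdom a'.val ⊆ pdom a.val) :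
    ∀ {x y : ℕ}, a'.val x = some y → a.val x = some y := by
  intro x y hx
  have hxd : x ∈ pdom a.val := hdom (by simp [pdom, hx])
  obtain ⟨z, hz⟩ := mem_pdom hxd
  have e1 := isom_shift a.property hz h0
  have e2 := isom_shift a'.property hx h0'
  have : z = y := by omega
  rw [hz, this]

lemma isom_pid : Isom pid := by
  refine ⟨fun a b c ha hb => ?_, ⟨?_, ?_⟩, fun a b c d ha hb => ?_⟩
  · simp [pid] at ha hb; omega
  · have : (pdom pid)ᶜ = ∅ := by ext n; simp [pdom, pid]
    rw [this]; exact Set.finite_empty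
  · have : (pran pid)ᶜ = ∅ := by ext n; simp [pran, pid]
    rw [this]; exact Set.finite_empty
  · simp [pid] at ha hb
    subst ha; subst hb; rfl

lemma isom_restrictId (m : ℕ) : Isom (fun n => if n = m then none else some n) := by
  refine ⟨fun a b c ha hb => ?_, ⟨?_, ?_⟩, fun a b c d ha hb => ?_⟩
  · simp only at ha hb
    split at ha
    · exact absurd ha (by simp)
    split at hb
    · exact absurd hb (by simp)
    injection ha; injection hb; omega
  · apply (Set.finite_singleton m).subset
    intro x hx
    simp only [pdom, Set.mem_compl_iff, Set.mem_setOf_eq, not_not] at hx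
    by_cases h : x = m
    · exact h
    · simp [h] at hx
  · apply (Set.finite_singleton m).subset
    intro x hx
    simp only [pran, Set.mem_compl_iff, Set.mem_setOf_eq, not_exists] at hx
    simp only [Set.mem_singleton_iff]
    by_contra h
    exact hx x (by simp [h])
  · simp only at ha hb
    split at ha
    · exact absurd ha (by simp)
    split at hb
    · exact absurd hb (by simp)
    injection ha with h1; injection hb with h2
    rw [← h1, ← h2]

lemma self_mem_UW (a : INf) (F : Finset ℕ) : a ∈ UW a F := ⟨subset_rfl, fun _ _ => rfl⟩

end Aux

/-- The sets `U_α(F)` form a base of a topology `τ_W` on `Iℕ∞` for which composition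
of partial maps is jointly continuous and inversion is continuous; moreover `τ_W` is
not discrete. -/
theorem stmt19 :
    ∃ t : TopologicalSpace INf,
      @TopologicalSpace.IsTopologicalBasis INf t BW ∧
      (∀ comp : INf → INf → INf, (∀ a b, (comp a b).val = PComp a.val b.val) →
        @Continuous (INf × INf) INf (@instTopologicalSpaceProd INf INf t t) t
          (fun p => comp p.1 p.2)) ∧
      (∀ inv : INf → INf, (∀ a, PInv a.val (inv a).val) →
        @Continuous INf INf t t inv) ∧
      t ≠ ⊥ := by
  classical
  letI t : TopologicalSpace INf := TopologicalSpace.generateFrom BW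
  have hB : TopologicalSpace.IsTopologicalBasis BW := by
    refine ⟨?_, ?_, rfl⟩
    · rintro s1 ⟨a1, F1, hF1, rfl⟩ s2 ⟨a2, F2, hF2, rfl⟩ x ⟨⟨hd1, ha1⟩, ⟨hd2, ha2⟩⟩
      have hFx : (↑(F1 ∪ F2) : Set ℕ) ⊆ pdom x.val := by
        intro n hn
        simp only [Finset.coe_union, Set.mem_union, Finset.mem_coe] at hn
        rcases hn with hn | hn
        · show x.val n ≠ none
          rw [ha1 n hn]; exact hF1 hn
        · show x.val n ≠ none
          rw [ha2 n hn]; exact hF2 hn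
      refine ⟨UW x (F1 ∪ F2), ⟨x, F1 ∪ F2, hFx, rfl⟩, self_mem_UW x _, ?_⟩
      rintro y ⟨hdy, hay⟩
      constructor
      · exact ⟨hdy.trans hd1, fun n hn =>
          (hay n (Finset.mem_union_left _ hn)).trans (ha1 n hn)⟩
      · exact ⟨hdy.trans hd2, fun n hn =>
          (hay n (Finset.mem_union_right _ hn)).trans (ha2 n hn)⟩
    · refine Set.eq_univ_of_forall fun x => ?_
      exact ⟨UW x ∅, ⟨x, ∅, by simp, rfl⟩, self_mem_UW x ∅⟩
  refine ⟨t, hB, ?_, ?_, ?_⟩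
  -- Composition is continuous
  · intro comp hcomp
    rw [hB.continuous_iff]
    rintro s ⟨γ, F, hF, rfl⟩
    rw [isOpen_prod_iff]
    rintro a b ⟨hdc, hac⟩
    obtain ⟨n₀, hn₀, -⟩ := exists_large_mem (comp a b).property.2.1.1 0
    set g : ℕ → ℕ := fun x => (a.val x).getD 0 with hg
    have hkey : ∀ x ∈ insert n₀ F, ∃ y z, a.val x = some y ∧ b.val y = some z ∧ g x = y := by
      intro x hx
      have hne : PComp a.val b.val x ≠ none := by
        rw [← hcomp a b]
        rcases Finset.mem_insert.mp hx with rfl | hx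
        · exact hn₀
        · rw [hac x hx]; exact hF hx
      rcases h : a.val x with _ | y
      · simp [PComp, h] at hne
      · have hb' : b.val y ≠ none := by simpa [PComp, h] using hne
        obtain ⟨z, hz⟩ := Option.ne_none_iff_exists'.mp hb'
        exact ⟨y, z, rfl, hz, by simp [hg, h]⟩
    have hFa : (↑(insert n₀ F) : Set ℕ) ⊆ pdom a.val := by
      intro x hx
      obtain ⟨y, z, hy, -, -⟩ := hkey x (by simpa using hx)
      simp [pdom, hy]
    have hFb : (↑((insert n₀ F).image g) : Set ℕ) ⊆ pdom b.val := by
      intro u hu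
      simp only [Finset.coe_image, Set.mem_image, Finset.mem_coe] at hu
      obtain ⟨x, hx, rfl⟩ := hu
      obtain ⟨y, z, -, hz, hgx⟩ := hkey x hx
      rw [hgx]
      simp [pdom, hz]
    refine ⟨UW a (insert n₀ F), UW b ((insert n₀ F).image g),
      hB.isOpen ⟨a, _, hFa, rfl⟩, hB.isOpen ⟨b, _, hFb, rfl⟩,
      self_mem_UW a _, self_mem_UW b _, ?_⟩
    rintro ⟨a', b'⟩ ⟨⟨hda', haa'⟩, ⟨hdb', hbb'⟩⟩
    obtain ⟨y₀, z₀, hay₀, hbz₀, hgy₀⟩ := hkey n₀ (Finset.mem_insert_self _ _)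
    have ha0' : a'.val n₀ = some y₀ := by
      rw [haa' n₀ (Finset.mem_insert_self _ _)]; exact hay₀
    have ra : ∀ {x y : ℕ}, a'.val x = some y → a.val x = some y :=
      restrict_of_agree hay₀ ha0' hda'
    have hb0' : b'.val y₀ = some z₀ := by
      rw [hbb' y₀ (Finset.mem_image.mpr ⟨n₀, Finset.mem_insert_self _ _, hgy₀⟩)]
      exact hbz₀
    have rb : ∀ {x y : ℕ}, b'.val x = some y → b.val x = some y :=
      restrict_of_agree hbz₀ hb0' hdb'
    constructor
    · intro n hn
      have hn' : PComp a'.val b'.val n ≠ none := by rwa [← hcomp a' b']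
      rcases h1 : a'.val n with _ | y
      · simp [PComp, h1] at hn'
      have hb'' : b'.val y ≠ none := by simpa [PComp, h1] using hn'
      obtain ⟨z, hz⟩ := Option.ne_none_iff_exists'.mp hb''
      apply hdc
      show (comp a b).val n ≠ none
      rw [hcomp a b]
      simp [PComp, ra h1, rb hz]
    · intro x hx
      obtain ⟨y, z, hya, hzb, hgx⟩ := hkey x (Finset.mem_insert_of_mem hx)
      have h1 : a'.val x = some y := by
        rw [haa' x (Finset.mem_insert_of_mem hx)]; exact hya
      have h2 : b'.val y = some z := by
        rw [hbb' y (Finset.mem_image.mpr ⟨x, Finset.mem_insert_of_mem hx, hgx⟩)]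
        exact hzb
      show (comp a' b').val x = γ.val x
      have hcval : (comp a' b').val x = some z := by
        rw [hcomp a' b']; simp [PComp, h1, h2]
      rw [hcval, ← hac x hx, hcomp a b]
      simp [PComp, hya, hzb]
  -- Inversion is continuous
  · intro inv hinv
    rw [hB.continuous_iff]
    rintro s ⟨γ, F, hF, rfl⟩
    rw [hB.isOpen_iff]
    rintro a ⟨hdi, hai⟩
    obtain ⟨n₀, hn₀, -⟩ := exists_large_mem a.property.2.1.1 0
    obtain ⟨m₀, hm₀⟩ := mem_pdom hn₀
    set g : ℕ → ℕ := fun y => ((inv a).val y).getD 0 with hg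
    have hkey : ∀ y ∈ F, (inv a).val y = some (g y) ∧ a.val (g y) = some y := by
      intro y hy
      have hne : (inv a).val y ≠ none := by rw [hai y hy]; exact hF hy
      obtain ⟨x, hx⟩ := Option.ne_none_iff_exists'.mp hne
      have hax : a.val x = some y := (hinv a x y).mpr hx
      constructor <;> simp [hg, hx, hax]
    have hFa : (↑(insert n₀ (F.image g)) : Set ℕ) ⊆ pdom a.val := by
      intro x hx
      simp only [Finset.coe_insert, Set.mem_insert_iff, Finset.coe_image,
        Set.mem_image, Finset.mem_coe] at hx
      rcases hx with rfl | ⟨y, hy, rfl⟩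
      · simp [pdom, hm₀]
      · simp [pdom, (hkey y hy).2]
    refine ⟨UW a (insert n₀ (F.image g)), ⟨a, _, hFa, rfl⟩, self_mem_UW a _, ?_⟩
    rintro a' ⟨hda', haa'⟩
    have ha0' : a'.val n₀ = some m₀ := by
      rw [haa' n₀ (Finset.mem_insert_self _ _)]; exact hm₀
    have ra : ∀ {x y : ℕ}, a'.val x = some y → a.val x = some y :=
      restrict_of_agree hm₀ ha0' hda'
    constructor
    · intro y hy
      obtain ⟨x, hx⟩ := mem_pdom hy
      have h1 : a'.val x = some y := (hinv a' x y).mpr hx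
      have h2 : (inv a).val y = some x := (hinv a x y).mp (ra h1)
      exact hdi (by simp [pdom, h2])
    · intro y hy
      obtain ⟨h1, h2⟩ := hkey y hy
      have h3 : a'.val (g y) = some y := by
        rw [haa' (g y) (Finset.mem_insert_of_mem (Finset.mem_image.mpr ⟨y, hy, rfl⟩))]
        exact h2
      have h4 : (inv a').val y = some (g y) := (hinv a' (g y) y).mp h3
      rw [h4, ← hai y hy, h1]
  -- The topology is not discrete
  · intro h
    haveI : DiscreteTopology INf := ⟨h⟩
    set e : INf := ⟨pid, isom_pid⟩ with he
    have hopen : IsOpen ({e} : Set INf) := isOpen_discrete _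
    obtain ⟨s, ⟨γ, F, hF, rfl⟩, hmem, hsub⟩ := hB.isOpen_iff.mp hopen e rfl
    obtain ⟨hde, hae⟩ := hmem
    set m := F.sup id + 1 with hm
    have hmF : m ∉ F := by
      intro hmem'
      have := Finset.le_sup (f := id) hmem'
      simp only [id] at this
      omega
    set β : INf := ⟨fun n => if n = m then none else some n, isom_restrictId m⟩ with hβdef
    have hβ : β ∈ UW γ F := by
      constructor
      · intro n _
        exact hde (by simp [pid, pdom, he])
      · intro x hx
        have hxm : x ≠ m := fun hh => hmF (hh ▸ hx)
        rw [← hae x hx]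
        simp [pid, hβdef, he, hxm]
    have heq : β = e := hsub hβ
    have := congrFun (congrArg Subtype.val heq) m
    simp [pid, hβdef, he] at this
end
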